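/- For any separating tree T on [n], the minimal simple congruence ≡_∘ for which T is admissible (whose non-contracted arcs are the up and down arcs that are subarcs of mandatory arcs of T, together with their subarcs) is a permutree congruence; i.e., every subarc-minimal arc of 𝒜_n ∖ 𝒜_{≡_∘} has length exactly 2. Key step: if 1 ≤ i < j ≤ n with j - i > 2 and both u(i,j-1) and u(i+1,j) are subarcs of mandatory arcs of T, then u(i,j) is a subarc of a mandatory arc of T. -/

import Mathlib

open Relation Finset

/-- The undirected simple graph underlying a directed edge relation. -/
def dirGraph {α : Type*} (E : α → α → Prop) : SimpleGraph α where
  Adj a b := a ≠ b ∧ (E a b ∨ E b a)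
  symm := ⟨fun a b h => ⟨h.1.symm, h.2.symm⟩⟩
  loopless := ⟨fun a h => h.1 rfl⟩

/-- `x` lies in the subtree attached to `p` at `j`: every walk from `x` to `j`
passes through `p`. -/
def inSub {α : Type*} (E : α → α → Prop) (j p x : α) : Prop :=
  ∀ w : (dirGraph E).Walk x j, p ∈ w.support

def atMostTwo {α : Type*} (s : Set α) : Prop :=
  ∀ a ∈ s, ∀ b ∈ s, ∀ c ∈ s, a = b ∨ a = c ∨ b = c

/-- A separating tree on `[n]`, encoded by its directed edge relation
(`E a b` means there is an edge directed from `a` to `b`, i.e. `b` is a parent of `a`). -/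
def IsSepTree {n : ℕ} (E : Fin n → Fin n → Prop) : Prop :=
  (dirGraph E).IsTree ∧
  (∀ j, atMostTwo {p | E j p}) ∧
  (∀ j, atMostTwo {c | E c j}) ∧
  (∀ j p₁ p₂, E j p₁ → E j p₂ → p₁ ≠ p₂ →
    ∀ x₁ x₂, inSub E j p₁ x₁ → inSub E j p₂ x₂ →
      (x₁ < j ∧ j < x₂) ∨ (x₂ < j ∧ j < x₁)) ∧
  (∀ j c₁ c₂, E c₁ j → E c₂ j → c₁ ≠ c₂ →
    ∀ x₁ x₂, inSub E j c₁ x₁ → inSub E j c₂ x₂ →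
      (x₁ < j ∧ j < x₂) ∨ (x₂ < j ∧ j < x₁))
/-- An arc `(a, b, A, B)` on `[n]`: endpoints `a < b` and a partition
`A ⊔ B` of the open interval `]a, b[`. -/
structure Arc (n : ℕ) where
  a : Fin n
  b : Fin n
  A : Finset (Fin n)
  B : Finset (Fin n)
  hab : a < b
  hdisj : Disjoint A B
  hunion : A ∪ B = Finset.Ioo a b

/-- `Subarc α β` : `α` is a subarc of `β`. -/
def Subarc {n : ℕ} (α β : Arc n) : Prop :=
  β.a ≤ α.a ∧ α.b ≤ β.b ∧ α.A ⊆ β.A ∧ α.B ⊆ β.B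

/-- An arc ideal: a lower set for the subarc order. -/
def IsArcIdeal {n : ℕ} (I : Set (Arc n)) : Prop :=
  ∀ α β : Arc n, Subarc α β → β ∈ I → α ∈ I

/-- An ideal is essential when it contains all basic arcs `(i, i+1, ∅, ∅)`. -/
def EssentialIdeal {n : ℕ} (I : Set (Arc n)) : Prop :=
  ∀ α : Arc n, (α.b : ℕ) = (α.a : ℕ) + 1 → α ∈ I

/-- `α` is a subarc-minimal arc of the complement of `I`. -/
def MinNonArc {n : ℕ} (I : Set (Arc n)) (α : Arc n) : Prop :=
  α ∉ I ∧ ∀ β : Arc n, Subarc β α → β ∉ I → β = α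

/-- An ideal is simple when all subarc-minimal arcs of its complement are
up arcs (`B = ∅`) or down arcs (`A = ∅`). -/
def SimpleIdeal {n : ℕ} (I : Set (Arc n)) : Prop :=
  ∀ α : Arc n, MinNonArc I α → α.B = ∅ ∨ α.A = ∅
/-- A mandatory arc of a separating tree `E`: one arc per edge of the tree between
`α.a < α.b`, where `A` (resp. `B`) records the intermediate values admitting a
directed path to the edge (resp. from the edge). -/
def MandatoryArc {n : ℕ} (E : Fin n → Fin n → Prop) (α : Arc n) : Prop :=
  (E α.a α.b ∨ E α.b α.a) ∧
  ∀ j : Fin n, α.a < j → j < α.b →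
    ((j ∈ α.A ↔ (Relation.ReflTransGen E j α.a ∨ Relation.ReflTransGen E j α.b)) ∧
     (j ∈ α.B ↔ (Relation.ReflTransGen E α.a j ∨ Relation.ReflTransGen E α.b j)))

/-- A forbidden up arc of a separating tree `E`: the up arc `u(M, m)` where
`M = max L`, `m = min R` for two ancestor subtrees `L < R` of a node `j`. -/
def ForbiddenUpArc {n : ℕ} (E : Fin n → Fin n → Prop) (α : Arc n) : Prop :=
  α.B = ∅ ∧ ∃ j p₁ p₂ : Fin n, E j p₁ ∧ E j p₂ ∧ p₁ ≠ p₂ ∧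
    inSub E j p₁ α.a ∧ (∀ x, inSub E j p₁ x → x ≤ α.a) ∧
    inSub E j p₂ α.b ∧ (∀ x, inSub E j p₂ x → α.b ≤ x)

/-- A forbidden down arc of a separating tree `E`: the down arc `d(M, m)` where
`M = max L`, `m = min R` for two descendant subtrees `L < R` of a node `j`. -/
def ForbiddenDownArc {n : ℕ} (E : Fin n → Fin n → Prop) (α : Arc n) : Prop :=
  α.A = ∅ ∧ ∃ j c₁ c₂ : Fin n, E c₁ j ∧ E c₂ j ∧ c₁ ≠ c₂ ∧
    inSub E j c₁ α.a ∧ (∀ x, inSub E j c₁ x → x ≤ α.a) ∧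
    inSub E j c₂ α.b ∧ (∀ x, inSub E j c₂ x → α.b ≤ x)

/-- A separating tree is `I`-admissible when the arc ideal `I` contains all its
mandatory arcs and none of its forbidden arcs. -/
def AdmissibleTree {n : ℕ} (I : Set (Arc n)) (E : Fin n → Fin n → Prop) : Prop :=
  IsSepTree E ∧
  (∀ α : Arc n, MandatoryArc E α → α ∈ I) ∧
  (∀ α : Arc n, ForbiddenUpArc E α ∨ ForbiddenDownArc E α → α ∉ I)

/-- `σ` is a linear extension of the directed tree `E`: `σ p` is the value at
position `p`, and each directed edge goes from an earlier to a later value. -/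
def IsLinExt {n : ℕ} (E : Fin n → Fin n → Prop) (σ : Equiv.Perm (Fin n)) : Prop :=
  ∀ a b : Fin n, E a b → σ.symm a < σ.symm b
/-- The arc ideal of the minimal simple congruence `≡_∘` for which the separating
tree `E` is admissible: its complement is the upper ideal generated by the up and
down arcs which are not subarcs of any mandatory arc of `E`. -/
def treeMinIdeal {n : ℕ} (E : Fin n → Fin n → Prop) : Set (Arc n) :=
  {α | ¬ ∃ γ : Arc n, Subarc γ α ∧ (γ.B = ∅ ∨ γ.A = ∅) ∧
        ¬ ∃ β : Arc n, MandatoryArc E β ∧ Subarc γ β}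

/-- The arc ideal of the maximal simple congruence `≡_•` for which the separating
tree `E` is admissible: its complement is the upper ideal generated by the
forbidden arcs of `E`. -/
def treeMaxIdeal {n : ℕ} (E : Fin n → Fin n → Prop) : Set (Arc n) :=
  {α | ¬ ∃ γ : Arc n, Subarc γ α ∧ (ForbiddenUpArc E γ ∨ ForbiddenDownArc E γ)}

/-- `γ` is the up arc `u(x, y)`. -/
def UpArcBetween {n : ℕ} (x y : Fin n) (γ : Arc n) : Prop :=
  γ.a = x ∧ γ.b = y ∧ γ.B = ∅

section SepTreeLemmas

open SimpleGraph

variable {n : ℕ} {E : Fin n → Fin n → Prop}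

/-- directed walks reach all their support vertices from the start -/
lemma dirWalk_reach_all {u v : Fin n} (p : (dirGraph E).Walk u v)
    (hp : ∀ d ∈ p.darts, E d.toProd.1 d.toProd.2) :
    ∀ c ∈ p.support, Relation.ReflTransGen E u c := by
  induction p with
  | nil => intro c hc; simp at hc; subst hc; exact .refl
  | cons h q ih =>
    intro c hc
    rw [SimpleGraph.Walk.support_cons, List.mem_cons] at hc
    have h1 : E _ _ := hp _ (by rw [SimpleGraph.Walk.darts_cons]; exact List.mem_cons_self)
    rcases hc with rfl | hc
    · exact .refl
    · refine Relation.ReflTransGen.head h1 (ih ?_ c hc)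
      intro d hd
      exact hp d (by rw [SimpleGraph.Walk.darts_cons]; exact List.mem_cons_of_mem _ hd)

lemma dirWalk_reach_end {u v : Fin n} (p : (dirGraph E).Walk u v)
    (hp : ∀ d ∈ p.darts, E d.toProd.1 d.toProd.2) : Relation.ReflTransGen E u v :=
  dirWalk_reach_all p hp v p.end_mem_support

/-- From reflexive transitive closure, get a directed path. -/
lemma exists_dirPath {u v : Fin n} (h : Relation.ReflTransGen E u v) :
    ∃ p : (dirGraph E).Walk u v, p.IsPath ∧ ∀ d ∈ p.darts, E d.toProd.1 d.toProd.2 := by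
  induction h using Relation.ReflTransGen.head_induction_on with
  | refl => exact ⟨.nil, by simp, by simp⟩
  | head hum hmv ih =>
    rename_i u' m
    obtain ⟨p, hp, hdir⟩ := ih
    by_cases hum' : u' = m
    · subst hum'; exact ⟨p, hp, hdir⟩
    by_cases hu : u' ∈ p.support
    · refine ⟨p.dropUntil u' hu, hp.dropUntil hu, fun d hd => hdir d ?_⟩
      exact p.darts_dropUntil_subset hu hd
    · refine ⟨.cons (show (dirGraph E).Adj u' m from ⟨hum', Or.inl hum⟩) p, ?_, fun d hd => ?_⟩
      · rw [SimpleGraph.Walk.cons_isPath_iff]; exact ⟨hp, hu⟩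
      · rw [SimpleGraph.Walk.darts_cons, List.mem_cons] at hd
        rcases hd with rfl | hd
        · exact hum
        · exact hdir d hd

end SepTreeLemmas
section SepTreeLemmas2

open SimpleGraph

variable {n : ℕ} {E : Fin n → Fin n → Prop}

/-- In an acyclic graph, the support of any path is contained in any walk with same ends. -/
lemma path_support_subset (hA : (dirGraph E).IsAcyclic) {u v : Fin n}
    {p : (dirGraph E).Walk u v} (hp : p.IsPath) (z : (dirGraph E).Walk u v) :
    p.support ⊆ z.support := by
  have h1 : (⟨p, hp⟩ : (dirGraph E).Path u v) = ⟨z.bypass, z.bypass_isPath⟩ :=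
    hA.path_unique _ _
  have h2 : p = z.bypass := congrArg Subtype.val h1
  rw [h2]
  exact z.support_bypass_subset

/-- Any vertex on a path from x to v is passed by every walk from x to v. -/
lemma inSub_of_mem_path (hA : (dirGraph E).IsAcyclic) {x v w : Fin n}
    {p : (dirGraph E).Walk x v} (hp : p.IsPath) (hw : w ∈ p.support) :
    inSub E v w x := fun z => path_support_subset hA hp z hw

lemma inSub_self (v w : Fin n) : inSub E v w w := fun z => z.start_mem_support

/-- If `R u v` then every path from `u` to `v` is directed. -/
lemma path_directed (hA : (dirGraph E).IsAcyclic) {u v : Fin n}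
    (h : Relation.ReflTransGen E u v) {p : (dirGraph E).Walk u v} (hp : p.IsPath) :
    ∀ d ∈ p.darts, E d.toProd.1 d.toProd.2 := by
  obtain ⟨q, hq, hdir⟩ := exists_dirPath h
  have h1 : (⟨p, hp⟩ : (dirGraph E).Path u v) = ⟨q, hq⟩ := hA.path_unique _ _
  have h2 : p = q := congrArg Subtype.val h1
  rw [h2]; exact hdir

/-- a directed nonnil walk has a last edge into `v` from its support -/
lemma exists_last_edge {u v : Fin n} (p : (dirGraph E).Walk u v)
    (hdir : ∀ d ∈ p.darts, E d.toProd.1 d.toProd.2) (huv : u ≠ v) :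
    ∃ w ∈ p.support, E w v := by
  induction p with
  | nil => exact absurd rfl huv
  | @cons a m v' h q ih =>
    by_cases hmv : m = v'
    · subst hmv
      refine ⟨a, (SimpleGraph.Walk.cons h q).start_mem_support, ?_⟩
      exact hdir _ (by rw [SimpleGraph.Walk.darts_cons]; exact List.mem_cons_self)
    · obtain ⟨w, hw, hwv⟩ := ih (fun d hd =>
        hdir d (by rw [SimpleGraph.Walk.darts_cons]; exact List.mem_cons_of_mem _ hd)) hmv
      exact ⟨w, by rw [SimpleGraph.Walk.support_cons]; exact List.mem_cons_of_mem _ hw, hwv⟩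

/-- KEY1: if `R u v`, `u ≠ v`, then for any `c`, either `R u c` or there is a
child `w ≠ c` of `v` through which `u` hangs. -/
lemma reach_cases (hA : (dirGraph E).IsAcyclic) {u v : Fin n}
    (h : Relation.ReflTransGen E u v) (huv : u ≠ v) (c : Fin n) :
    Relation.ReflTransGen E u c ∨ ∃ w, E w v ∧ w ≠ c ∧ inSub E v w u := by
  obtain ⟨p, hp, hdir⟩ := exists_dirPath h
  by_cases hc : c ∈ p.support
  · exact Or.inl (dirWalk_reach_all p hdir c hc)
  · obtain ⟨w, hw, hwv⟩ := exists_last_edge p hdir huv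
    exact Or.inr ⟨w, hwv, fun he => hc (he ▸ hw), inSub_of_mem_path hA hp hw⟩

/-- a walk directed both ways has a doubled last edge -/
lemma exists_last_double {u v : Fin n} (p : (dirGraph E).Walk u v)
    (hdir : ∀ d ∈ p.darts, E d.toProd.1 d.toProd.2 ∧ E d.toProd.2 d.toProd.1) (huv : u ≠ v) :
    ∃ w ∈ p.support, E w v ∧ E v w := by
  induction p with
  | nil => exact absurd rfl huv
  | @cons a m v' h q ih =>
    by_cases hmv : m = v'
    · subst hmv
      refine ⟨a, (SimpleGraph.Walk.cons h q).start_mem_support, ?_⟩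
      exact hdir _ (by rw [SimpleGraph.Walk.darts_cons]; exact List.mem_cons_self)
    · obtain ⟨w, hw, hwv⟩ := ih (fun d hd =>
        hdir d (by rw [SimpleGraph.Walk.darts_cons]; exact List.mem_cons_of_mem _ hd)) hmv
      exact ⟨w, by rw [SimpleGraph.Walk.support_cons]; exact List.mem_cons_of_mem _ hw, hwv⟩

end SepTreeLemmas2
section SepTreeLemmas3

open SimpleGraph

variable {n : ℕ} {E : Fin n → Fin n → Prop}

/-- Every path is directed forward, directed backward, or has a direction change. -/
lemma walk_split {u v : Fin n} (p : (dirGraph E).Walk u v) (hp : p.IsPath) :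
    (∀ d ∈ p.darts, E d.toProd.1 d.toProd.2) ∨
    (∀ d ∈ p.darts, E d.toProd.2 d.toProd.1) ∨
    ∃ (x y z : Fin n) (q₁ : (dirGraph E).Walk u y) (q₂ : (dirGraph E).Walk y v),
      q₁.IsPath ∧ q₂.IsPath ∧ x ∈ q₁.support ∧ z ∈ q₂.support ∧ x ≠ z ∧
      ((E y x ∧ E y z) ∨ (E x y ∧ E z y)) ∧
      q₁.support ⊆ p.support ∧ q₂.support ⊆ p.support := by
  induction p with
  | nil => exact Or.inl (by simp)
  | @cons u m v h q ih =>
    have hu : u ∉ q.support := (SimpleGraph.Walk.cons_isPath_iff h q).mp hp |>.2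
    have hq : q.IsPath := hp.of_cons
    have hsupcons : ∀ w, w ∈ q.support → w ∈ (SimpleGraph.Walk.cons h q).support := by
      intro w hw; rw [SimpleGraph.Walk.support_cons]; exact List.mem_cons_of_mem _ hw
    rcases ih hq with hf | hb | ⟨x, y, z, q₁, q₂, h1, h2, h3, h4, h5, h6, h7, h8⟩
    · by_cases hum : E u m
      · refine Or.inl fun d hd => ?_
        rw [SimpleGraph.Walk.darts_cons, List.mem_cons] at hd
        rcases hd with rfl | hd
        · exact hum
        · exact hf d hd
      · have hmu : E m u := h.2.resolve_left hum
        cases q with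
        | nil =>
          refine Or.inr (Or.inl fun d hd => ?_)
          rw [SimpleGraph.Walk.darts_cons, List.mem_cons] at hd
          rcases hd with rfl | hd
          · exact hmu
          · simp at hd
        | @cons m t v' h' q' =>
          have hmt : E m t := hf _ (by rw [SimpleGraph.Walk.darts_cons]; exact List.mem_cons_self)
          refine Or.inr (Or.inr ⟨u, m, t, .cons h .nil, .cons h' q', ?_, hq, ?_, ?_, ?_, ?_, ?_, ?_⟩)
          · rw [SimpleGraph.Walk.cons_isPath_iff]; simpa using h.1
          · simp
          · rw [SimpleGraph.Walk.support_cons]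
            exact List.mem_cons_of_mem _ (SimpleGraph.Walk.start_mem_support q')
          · intro huT; apply hu; rw [huT, SimpleGraph.Walk.support_cons]
            exact List.mem_cons_of_mem _ (SimpleGraph.Walk.start_mem_support q')
          · exact Or.inl ⟨hmu, hmt⟩
          · intro w hw; simp at hw
            rcases hw with rfl | rfl
            · exact SimpleGraph.Walk.start_mem_support _
            · exact hsupcons _ (SimpleGraph.Walk.start_mem_support _)
          · exact hsupcons
    · by_cases hmu : E m u
      · refine Or.inr (Or.inl fun d hd => ?_)
        rw [SimpleGraph.Walk.darts_cons, List.mem_cons] at hd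
        rcases hd with rfl | hd
        · exact hmu
        · exact hb d hd
      · have hum : E u m := h.2.resolve_right hmu
        cases q with
        | nil =>
          refine Or.inl fun d hd => ?_
          rw [SimpleGraph.Walk.darts_cons, List.mem_cons] at hd
          rcases hd with rfl | hd
          · exact hum
          · simp at hd
        | @cons m t v' h' q' =>
          have htm : E t m := hb _ (by rw [SimpleGraph.Walk.darts_cons]; exact List.mem_cons_self)
          refine Or.inr (Or.inr ⟨u, m, t, .cons h .nil, .cons h' q', ?_, hq, ?_, ?_, ?_, ?_, ?_, ?_⟩)
          · rw [SimpleGraph.Walk.cons_isPath_iff]; simpa using h.1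
          · simp
          · rw [SimpleGraph.Walk.support_cons]
            exact List.mem_cons_of_mem _ (SimpleGraph.Walk.start_mem_support q')
          · intro huT; apply hu; rw [huT, SimpleGraph.Walk.support_cons]
            exact List.mem_cons_of_mem _ (SimpleGraph.Walk.start_mem_support q')
          · exact Or.inr ⟨hum, htm⟩
          · intro w hw; simp at hw
            rcases hw with rfl | rfl
            · exact SimpleGraph.Walk.start_mem_support _
            · exact hsupcons _ (SimpleGraph.Walk.start_mem_support _)
          · exact hsupcons
    · refine Or.inr (Or.inr ⟨x, y, z, .cons h q₁, q₂, ?_, h2, ?_, h4, h5, h6, ?_, ?_⟩)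
      · rw [SimpleGraph.Walk.cons_isPath_iff]
        exact ⟨h1, fun hc => hu (h7 hc)⟩
      · rw [SimpleGraph.Walk.support_cons]; exact List.mem_cons_of_mem _ h3
      · intro w hw; rw [SimpleGraph.Walk.support_cons] at hw ⊢
        rcases List.mem_cons.mp hw with rfl | hw
        · exact List.mem_cons_self
        · exact List.mem_cons_of_mem _ (h7 hw)
      · intro w hw; exact hsupcons _ (h8 hw)

/-- Choose the near endpoint of an edge from `j`. -/
lemma exists_near (hT : (dirGraph E).IsTree) {a b j : Fin n}
    (hadj : (dirGraph E).Adj a b) :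
    ∃ (c d : Fin n) (p : (dirGraph E).Walk j c),
      ((c = a ∧ d = b) ∨ (c = b ∧ d = a)) ∧ p.IsPath ∧ d ∉ p.support := by
  obtain ⟨w⟩ := hT.isConnected j a
  set p₀ := w.bypass with hp₀def
  have hp₀ : p₀.IsPath := w.bypass_isPath
  by_cases hb : b ∈ p₀.support
  · refine ⟨b, a, p₀.takeUntil b hb, Or.inr ⟨rfl, rfl⟩, hp₀.takeUntil hb, ?_⟩
    intro ha
    have hspec := p₀.take_spec hb
    have hnd := hp₀.support_nodup
    rw [← hspec, SimpleGraph.Walk.support_append, List.nodup_append] at hnd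
    have ha' : a ∈ (p₀.dropUntil b hb).support.tail := by
      have hend : a ∈ (p₀.dropUntil b hb).support := SimpleGraph.Walk.end_mem_support _
      have hab : a ≠ b := hadj.ne
      rw [SimpleGraph.Walk.support_eq_cons] at hend
      exact (List.mem_cons.mp hend).resolve_left hab
    exact hnd.2.2 a ha a ha' rfl
  · exact ⟨a, b, p₀, Or.inl ⟨rfl, rfl⟩, hp₀, hb⟩

end SepTreeLemmas3
section SepTreeLemmas4

open SimpleGraph

variable {n : ℕ} {E : Fin n → Fin n → Prop}

lemma fin_lt_trans {a b c : Fin n} (h1 : a < b) (h2 : b < c) : a < c := lt_trans h1 h2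

/-- reverse of a directed-both-ways extraction: darts of p bwd from p.reverse fwd -/
lemma darts_bwd_of_reverse_fwd {u v : Fin n} (p : (dirGraph E).Walk u v)
    (h : ∀ d ∈ p.reverse.darts, E d.toProd.1 d.toProd.2) :
    ∀ d ∈ p.darts, E d.toProd.2 d.toProd.1 := by
  intro d hd
  have : d.symm ∈ p.reverse.darts := by
    rw [SimpleGraph.Walk.darts_reverse, List.mem_reverse, List.mem_map]
    exact ⟨d, hd, rfl⟩
  have := h _ this
  simpa [SimpleGraph.Dart.symm] using this

/-- DICHOT, half 1: a vertex strictly inside an edge cannot be both below and above it. -/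
lemma edge_not_both (hE : IsSepTree E) {a b j : Fin n} (he : E a b ∨ E b a)
    (h1 : a < j) (h2 : j < b)
    (hdn : Relation.ReflTransGen E j a ∨ Relation.ReflTransGen E j b)
    (hup : Relation.ReflTransGen E a j ∨ Relation.ReflTransGen E b j) : False := by
  have hA : (dirGraph E).IsAcyclic := hE.1.IsAcyclic
  have hab : a ≠ b := ne_of_lt (fin_lt_trans h1 h2)
  have hadj : (dirGraph E).Adj a b := ⟨hab, he⟩
  obtain ⟨c, d, p, hcd, hp, hdns⟩ := exists_near (j := j) hE.1 hadj
  have hja : j ≠ a := ne_of_gt h1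
  have hjb : j ≠ b := ne_of_lt h2
  have hjc : j ≠ c := by rcases hcd with ⟨rfl, rfl⟩ | ⟨rfl, rfl⟩ <;> assumption
  have hdc : (dirGraph E).Adj d c := by
    rcases hcd with ⟨rfl, rfl⟩ | ⟨rfl, rfl⟩
    · exact hadj.symm
    · exact hadj
  -- the walk from d to j through c
  have hw1path : (SimpleGraph.Walk.cons hdc p.reverse).IsPath := by
    rw [SimpleGraph.Walk.cons_isPath_iff, SimpleGraph.Walk.isPath_reverse_iff]
    refine ⟨hp, ?_⟩
    rw [SimpleGraph.Walk.support_reverse, List.mem_reverse]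
    exact hdns
  -- Step 1 : R j c
  have hRjc : Relation.ReflTransGen E j c := by
    have hjd : Relation.ReflTransGen E j c ∨ Relation.ReflTransGen E j d := by
      rcases hcd with ⟨rfl, rfl⟩ | ⟨rfl, rfl⟩
      · exact hdn
      · exact hdn.symm
    rcases hjd with h | h
    · exact h
    · -- directed path j..d; c on it
      have hrev : (SimpleGraph.Walk.cons hdc p.reverse).reverse.IsPath := by
        rw [SimpleGraph.Walk.isPath_reverse_iff]; exact hw1path
      have hdir := path_directed hA h hrev
      refine dirWalk_reach_all _ hdir c ?_
      rw [SimpleGraph.Walk.support_reverse, List.mem_reverse, SimpleGraph.Walk.support_cons]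
      refine List.mem_cons_of_mem _ ?_
      rw [SimpleGraph.Walk.support_reverse, List.mem_reverse]
      exact p.end_mem_support
  -- Step 2 : R c j
  have hRcj : Relation.ReflTransGen E c j := by
    have hdj : Relation.ReflTransGen E c j ∨ Relation.ReflTransGen E d j := by
      rcases hcd with ⟨rfl, rfl⟩ | ⟨rfl, rfl⟩
      · exact hup
      · exact hup.symm
    rcases hdj with h | h
    · exact h
    · have hdir := path_directed hA h hw1path
      have hdirrev : ∀ e ∈ p.reverse.darts, E e.toProd.1 e.toProd.2 := by
        intro e hee
        refine hdir e ?_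
        rw [SimpleGraph.Walk.darts_cons]
        exact List.mem_cons_of_mem _ hee
      exact dirWalk_reach_end p.reverse hdirrev
  -- Step 3 : p is directed both ways
  have hfwd := path_directed hA hRjc hp
  have hbwd : ∀ e ∈ p.darts, E e.toProd.2 e.toProd.1 := by
    refine darts_bwd_of_reverse_fwd p ?_
    exact path_directed hA hRcj (by rw [SimpleGraph.Walk.isPath_reverse_iff]; exact hp)
  obtain ⟨w, hw, hwc, hcw⟩ := exists_last_double p (fun e he' => ⟨hfwd e he', hbwd e he'⟩) hjc
  have hwd : w ≠ d := fun hh => hdns (hh ▸ hw)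
  have hsub1 : inSub E c w j := inSub_of_mem_path hA hp hw
  have hsub2 : inSub E c d d := inSub_self c d
  -- separation at c
  have hsep : (j < c ∧ c < d) ∨ (d < c ∧ c < j) := by
    rcases hdc.2 with hdc' | hcd'
    · exact hE.2.2.2.2 c w d hwc hdc' hwd j d hsub1 hsub2
    · exact hE.2.2.2.1 c w d hcw hcd' hwd j d hsub1 hsub2
  rcases hcd with ⟨rfl, rfl⟩ | ⟨rfl, rfl⟩
  · rcases hsep with ⟨hx, _⟩ | ⟨hx, _⟩
    · exact absurd hx (not_lt_of_gt h1)
    · exact absurd hx (not_lt_of_gt (fin_lt_trans h1 h2))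
  · rcases hsep with ⟨_, hx⟩ | ⟨_, hx⟩
    · exact absurd hx (not_lt_of_gt (fin_lt_trans h1 h2))
    · exact absurd hx (not_lt_of_gt h2)

end SepTreeLemmas4
section SepTreeLemmas5

open SimpleGraph

variable {n : ℕ} {E : Fin n → Fin n → Prop}

lemma darts_reverse_fwd_of_bwd {u v : Fin n} (p : (dirGraph E).Walk u v)
    (h : ∀ d ∈ p.darts, E d.toProd.2 d.toProd.1) :
    ∀ d ∈ p.reverse.darts, E d.toProd.1 d.toProd.2 := by
  intro d hd
  rw [SimpleGraph.Walk.darts_reverse, List.mem_reverse, List.mem_map] at hd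
  obtain ⟨e, he, rfl⟩ := hd
  simpa [SimpleGraph.Dart.symm] using h e he

/-- DICHOT, half 2: a vertex strictly inside an edge is comparable to it. -/
lemma edge_compare (hE : IsSepTree E) {a b j : Fin n} (he : E a b ∨ E b a)
    (h1 : a < j) (h2 : j < b) :
    (Relation.ReflTransGen E j a ∨ Relation.ReflTransGen E j b) ∨
    (Relation.ReflTransGen E a j ∨ Relation.ReflTransGen E b j) := by
  have hA : (dirGraph E).IsAcyclic := hE.1.IsAcyclic
  have hab : a ≠ b := ne_of_lt (fin_lt_trans h1 h2)
  have hadj : (dirGraph E).Adj a b := ⟨hab, he⟩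
  obtain ⟨c, d, p, hcd, hp, hdns⟩ := exists_near (j := j) hE.1 hadj
  rcases walk_split p hp with hf | hb | ⟨x, y, z, q₁, q₂, hq1, hq2, hx, hz, hxz, hEor, hs1, hs2⟩
  · have : Relation.ReflTransGen E j c := dirWalk_reach_end p hf
    rcases hcd with ⟨rfl, rfl⟩ | ⟨rfl, rfl⟩
    · exact Or.inl (Or.inl this)
    · exact Or.inl (Or.inr this)
  · have : Relation.ReflTransGen E c j :=
      dirWalk_reach_end p.reverse (darts_reverse_fwd_of_bwd p hb)
    rcases hcd with ⟨rfl, rfl⟩ | ⟨rfl, rfl⟩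
    · exact Or.inr (Or.inl this)
    · exact Or.inr (Or.inr this)
  · exfalso
    have hdc : (dirGraph E).Adj d c := by
      rcases hcd with ⟨rfl, rfl⟩ | ⟨rfl, rfl⟩
      · exact hadj.symm
      · exact hadj
    have hin1 : inSub E y x j := inSub_of_mem_path hA hq1 hx
    have hq2r : q₂.reverse.IsPath := by rw [SimpleGraph.Walk.isPath_reverse_iff]; exact hq2
    have hzr : z ∈ q₂.reverse.support := by
      rw [SimpleGraph.Walk.support_reverse, List.mem_reverse]; exact hz
    have hin2 : inSub E y z c := inSub_of_mem_path hA hq2r hzr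
    have hdq2 : d ∉ q₂.reverse.support := by
      rw [SimpleGraph.Walk.support_reverse, List.mem_reverse]
      exact fun hh => hdns (hs2 hh)
    have hconsp : (SimpleGraph.Walk.cons hdc q₂.reverse).IsPath := by
      rw [SimpleGraph.Walk.cons_isPath_iff]; exact ⟨hq2r, hdq2⟩
    have hin3 : inSub E y z d := by
      refine inSub_of_mem_path hA hconsp ?_
      rw [SimpleGraph.Walk.support_cons]; exact List.mem_cons_of_mem _ hzr
    have O1 : (j < y ∧ y < c) ∨ (c < y ∧ y < j) := by
      rcases hEor with ⟨hEx, hEz⟩ | ⟨hEx, hEz⟩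
      · exact hE.2.2.2.1 y x z hEx hEz hxz j c hin1 hin2
      · exact hE.2.2.2.2 y x z hEx hEz hxz j c hin1 hin2
    have O2 : (j < y ∧ y < d) ∨ (d < y ∧ y < j) := by
      rcases hEor with ⟨hEx, hEz⟩ | ⟨hEx, hEz⟩
      · exact hE.2.2.2.1 y x z hEx hEz hxz j d hin1 hin3
      · exact hE.2.2.2.2 y x z hEx hEz hxz j d hin1 hin3
    rcases hcd with ⟨rfl, rfl⟩ | ⟨rfl, rfl⟩ <;>
      · simp only [Fin.lt_def] at O1 O2 h1 h2
        omega

/-- every edge of a separating tree carries a mandatory arc -/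
lemma mandatory_of_edge (hE : IsSepTree E) {a b : Fin n} (hab : a < b)
    (he : E a b ∨ E b a) :
    ∃ β : Arc n, MandatoryArc E β ∧ β.a = a ∧ β.b = b ∧
      ∀ j, j ∈ β.A ↔ j ∈ Finset.Ioo a b ∧
        (Relation.ReflTransGen E j a ∨ Relation.ReflTransGen E j b) := by
  classical
  refine ⟨⟨a, b,
    (Finset.Ioo a b).filter
      (fun j => Relation.ReflTransGen E j a ∨ Relation.ReflTransGen E j b),
    (Finset.Ioo a b).filter
      (fun j => ¬(Relation.ReflTransGen E j a ∨ Relation.ReflTransGen E j b)),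
    hab, Finset.disjoint_filter_filter_not _ _ _,
    Finset.filter_union_filter_not_eq _ _⟩, ⟨he, ?_⟩, rfl, rfl, fun j => Finset.mem_filter⟩
  intro j hja hjb
  constructor
  · rw [Finset.mem_filter]
    simp only [Finset.mem_Ioo]
    exact ⟨fun h => h.2, fun h => ⟨⟨hja, hjb⟩, h⟩⟩
  · rw [Finset.mem_filter]
    simp only [Finset.mem_Ioo]
    constructor
    · rintro ⟨-, hnd⟩
      exact (edge_compare hE he hja hjb).resolve_left hnd
    · intro hup
      exact ⟨⟨hja, hjb⟩, fun hdn => edge_not_both hE he hja hjb hdn hup⟩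

end SepTreeLemmas5
section SepTreeLemmas6

open SimpleGraph

variable {n : ℕ} {E : Fin n → Fin n → Prop}

/-- The central contradiction: configuration of two edges mutually above/below. -/
lemma core_contradiction (hE : IsSepTree E) {a₁ b₁ a₂ b₂ m M : Fin n}
    (e₁ : E a₁ b₁ ∨ E b₁ a₁) (e₂ : E a₂ b₂ ∨ E b₂ a₂)
    (h₁ : a₁ < m) (hmM : m < M) (hMb₁ : M ≤ b₁) (ha₂ : a₂ ≤ m) (hMb₂ : M < b₂)
    (P1 : Relation.ReflTransGen E m a₁ ∨ Relation.ReflTransGen E m b₁)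
    (P2 : Relation.ReflTransGen E M a₂ ∨ Relation.ReflTransGen E M b₂)
    (P3 : Relation.ReflTransGen E a₁ M ∨ Relation.ReflTransGen E b₁ M)
    (P4 : Relation.ReflTransGen E a₂ m ∨ Relation.ReflTransGen E b₂ m) : False := by
  have hA : (dirGraph E).IsAcyclic := hE.1.IsAcyclic
  have ha₂M : a₂ < M := lt_of_le_of_lt ha₂ hmM
  have hupM : ¬(Relation.ReflTransGen E a₂ M ∨ Relation.ReflTransGen E b₂ M) :=
    fun h => edge_not_both hE e₂ ha₂M hMb₂ P2 h
  have hnotmM : ¬ Relation.ReflTransGen E m M := by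
    intro h
    rcases eq_or_lt_of_le ha₂ with rfl | ha₂'
    · exact hupM (Or.inl h)
    · have hmb₂ : m < b₂ := lt_trans hmM hMb₂
      have hdn : Relation.ReflTransGen E m a₂ ∨ Relation.ReflTransGen E m b₂ := by
        rcases P2 with h2 | h2
        · exact Or.inl (h.trans h2)
        · exact Or.inr (h.trans h2)
      exact edge_not_both hE e₂ ha₂' hmb₂ hdn P4
  obtain ⟨d₁, hd₁mem, hRmd₁⟩ :
      ∃ d, (d = a₁ ∨ d = b₁) ∧ Relation.ReflTransGen E m d := by
    rcases P1 with h | h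
    · exact ⟨a₁, Or.inl rfl, h⟩
    · exact ⟨b₁, Or.inr rfl, h⟩
  obtain ⟨c₁, hc₁mem, hRc₁M⟩ :
      ∃ c, (c = a₁ ∨ c = b₁) ∧ Relation.ReflTransGen E c M := by
    rcases P3 with h | h
    · exact ⟨a₁, Or.inl rfl, h⟩
    · exact ⟨b₁, Or.inr rfl, h⟩
  have hmb₁ : m < b₁ := lt_of_lt_of_le hmM hMb₁
  have hmd₁ : m ≠ d₁ := by
    rcases hd₁mem with rfl | rfl
    · exact ne_of_gt h₁
    · exact ne_of_lt hmb₁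
  by_cases hcd : c₁ = d₁
  · exact hnotmM ((hcd ▸ hRmd₁).trans hRc₁M)
  · have hedge : E c₁ d₁ ∨ E d₁ c₁ := by
      rcases hc₁mem with rfl | rfl <;> rcases hd₁mem with rfl | rfl
      · exact absurd rfl hcd
      · exact e₁
      · exact e₁.symm
      · exact absurd rfl hcd
    rcases hedge with hE₁ | hE₂
    · rcases reach_cases hA hRmd₁ hmd₁ c₁ with hRmc₁ | ⟨w, hEwd₁, hwc₁, hsubw⟩
      · exact hnotmM (hRmc₁.trans hRc₁M)
      · have hsep := hE.2.2.2.2 d₁ w c₁ hEwd₁ hE₁ hwc₁ m c₁ hsubw (inSub_self d₁ c₁)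
        rcases hc₁mem with rfl | rfl <;> rcases hd₁mem with rfl | rfl <;>
          simp only [Fin.lt_def, Fin.le_def] at hsep h₁ hmM hMb₁ <;> omega
    · exact hnotmM ((hRmd₁.tail hE₂).trans hRc₁M)

end SepTreeLemmas6
section SepTreeLemmas7

open SimpleGraph

variable {n : ℕ} {E : Fin n → Fin n → Prop}

/-- helper: up arc between x and y as an Arc -/
def upArc (x y : Fin n) (hxy : x < y) : Arc n :=
  ⟨x, y, Finset.Ioo x y, ∅, hxy, Finset.disjoint_empty_right _, Finset.union_empty _⟩

lemma upArc_spec (x y : Fin n) (hxy : x < y) : UpArcBetween x y (upArc x y hxy) :=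
  ⟨rfl, rfl, rfl⟩

/-- unfold a sub-mandatory up arc hypothesis -/
lemma subMand_elim {x y : Fin n}
    (H : ∃ γ β : Arc n, UpArcBetween x y γ ∧ MandatoryArc E β ∧ Subarc γ β) :
    ∃ β : Arc n, MandatoryArc E β ∧ β.a ≤ x ∧ y ≤ β.b ∧
      ∀ j, x < j → j < y →
        Relation.ReflTransGen E j β.a ∨ Relation.ReflTransGen E j β.b := by
  obtain ⟨γ, β, ⟨hga, hgb, hgB⟩, hm, hsub⟩ := H
  refine ⟨β, hm, hga ▸ hsub.1, hgb ▸ hsub.2.1, fun j hj1 hj2 => ?_⟩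
  have hjA : j ∈ γ.A := by
    have := γ.hunion
    rw [hgB, Finset.union_empty] at this
    rw [this, hga, hgb, Finset.mem_Ioo]
    exact ⟨hj1, hj2⟩
  have hjβA : j ∈ β.A := hsub.2.2.1 hjA
  have hj1' : β.a < j := lt_of_le_of_lt (hga ▸ hsub.1) hj1
  have hj2' : j < β.b := lt_of_lt_of_le hj2 (hgb ▸ hsub.2.1)
  exact ((hm.2 j hj1' hj2').1.mp hjβA)

/-- build a sub-mandatory up arc witness from an edge -/
lemma subMand_intro (hE : IsSepTree E) {x y : Fin n} (hxy : x < y) {a b : Fin n}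
    (hab : a < b) (he : E a b ∨ E b a) (hax : a ≤ x) (hyb : y ≤ b)
    (hdn : ∀ j, x < j → j < y →
      Relation.ReflTransGen E j a ∨ Relation.ReflTransGen E j b) :
    ∃ γ β : Arc n, UpArcBetween x y γ ∧ MandatoryArc E β ∧ Subarc γ β := by
  obtain ⟨β, hm, hba, hbb, hA⟩ := mandatory_of_edge hE hab he
  refine ⟨upArc x y hxy, β, upArc_spec x y hxy, hm, hba ▸ hax, hbb ▸ hyb, ?_, ?_⟩
  · intro j hj
    simp only [upArc] at hj
    rw [Finset.mem_Ioo] at hj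
    rw [hA j, Finset.mem_Ioo]
    exact ⟨⟨lt_of_le_of_lt hax hj.1, lt_of_lt_of_le hj.2 hyb⟩, hdn j hj.1 hj.2⟩
  · intro j hj
    simp only [upArc, Finset.notMem_empty] at hj

/-- KEY STEP -/
lemma keyStep (hE : IsSepTree E) (x x' y' y : Fin n)
    (hx' : (x' : ℕ) = (x : ℕ) + 1) (hy : (y : ℕ) = (y' : ℕ) + 1)
    (hxy : (x : ℕ) + 2 < (y : ℕ))
    (H1 : ∃ γ β : Arc n, UpArcBetween x y' γ ∧ MandatoryArc E β ∧ Subarc γ β)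
    (H2 : ∃ γ β : Arc n, UpArcBetween x' y γ ∧ MandatoryArc E β ∧ Subarc γ β) :
    ∃ γ β : Arc n, UpArcBetween x y γ ∧ MandatoryArc E β ∧ Subarc γ β := by
  obtain ⟨β₁, hm₁, ha₁, hb₁, hdn₁⟩ := subMand_elim H1
  obtain ⟨β₂, hm₂, ha₂, hb₂, hdn₂⟩ := subMand_elim H2
  by_contra hgoal
  -- basic inequalities
  have hxx' : x < x' := by rw [Fin.lt_def]; omega
  have hx'y' : x' < y' := by rw [Fin.lt_def]; omega
  have hy'y : y' < y := by rw [Fin.lt_def]; omega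
  have hxy' : x < y' := lt_trans hxx' hx'y'
  have hx'y : x' < y := lt_trans hx'y' hy'y
  have hxyF : x < y := lt_trans hxy' hy'y
  -- P1 : x' is below β₁
  have P1 := hdn₁ x' hxx' hx'y'
  -- P2 : y' is below β₂
  have P2 := hdn₂ y' hx'y' hy'y
  -- P3
  have P3 : Relation.ReflTransGen E β₁.a y' ∨ Relation.ReflTransGen E β₁.b y' := by
    by_cases hby : y ≤ β₁.b
    · by_cases hdM : Relation.ReflTransGen E y' β₁.a ∨ Relation.ReflTransGen E y' β₁.b
      · exfalso
        refine hgoal (subMand_intro hE hxyF β₁.hab hm₁.1 ha₁ hby ?_)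
        intro j hj1 hj2
        by_cases hjy' : j = y'
        · exact hjy' ▸ hdM
        · refine hdn₁ j hj1 ?_
          rw [Fin.lt_def] at hj2 ⊢
          have : (j : ℕ) ≠ (y' : ℕ) := fun hc => hjy' (Fin.ext hc)
          omega
      · have hcomp := edge_compare hE hm₁.1 (lt_of_le_of_lt ha₁ hxy')
          (lt_of_lt_of_le hy'y hby)
        exact hcomp.resolve_left hdM
    · have hbeq : β₁.b = y' := by
        apply Fin.ext
        rw [Fin.le_def, not_le, Fin.lt_def] at *
        omega
      exact Or.inr (hbeq ▸ Relation.ReflTransGen.refl)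
  -- P4
  have P4 : Relation.ReflTransGen E β₂.a x' ∨ Relation.ReflTransGen E β₂.b x' := by
    by_cases hax : β₂.a ≤ x
    · by_cases hdm : Relation.ReflTransGen E x' β₂.a ∨ Relation.ReflTransGen E x' β₂.b
      · exfalso
        refine hgoal (subMand_intro hE hxyF β₂.hab hm₂.1 hax hb₂ ?_)
        intro j hj1 hj2
        by_cases hjx' : j = x'
        · exact hjx' ▸ hdm
        · refine hdn₂ j ?_ hj2
          rw [Fin.lt_def] at hj1 ⊢
          have : (j : ℕ) ≠ (x' : ℕ) := fun hc => hjx' (Fin.ext hc)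
          omega
      · have hcomp := edge_compare hE hm₂.1 (lt_of_le_of_lt hax hxx')
          (lt_of_lt_of_le hx'y hb₂)
        exact hcomp.resolve_left hdm
    · have haeq : β₂.a = x' := by
        apply Fin.ext
        rw [not_le, Fin.lt_def] at hax
        have := Fin.le_def.mp ha₂
        omega
      exact Or.inl (haeq ▸ Relation.ReflTransGen.refl)
  exact core_contradiction hE hm₁.1 hm₂.1 (lt_of_le_of_lt ha₁ hxx') hx'y'
    hb₁ ha₂ (lt_of_lt_of_le hy'y hb₂) P1 P2 P3 P4

end SepTreeLemmas7
section SepTreeLemmas8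

open SimpleGraph

variable {n : ℕ}

lemma dirGraph_swap (E : Fin n → Fin n → Prop) :
    dirGraph (Function.swap E) = dirGraph E := by
  ext a b
  exact ⟨fun ⟨h1, h2⟩ => ⟨h1, h2.symm⟩, fun ⟨h1, h2⟩ => ⟨h1, h2.symm⟩⟩

lemma inSub_swap (E : Fin n → Fin n → Prop) (j p x : Fin n) :
    inSub (Function.swap E) j p x ↔ inSub E j p x := by
  unfold inSub
  rw [dirGraph_swap]

lemma isSepTree_swap {E : Fin n → Fin n → Prop} (hE : IsSepTree E) :
    IsSepTree (Function.swap E) := by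
  obtain ⟨hT, h2, h3, h4, h5⟩ := hE
  refine ⟨by rw [dirGraph_swap]; exact hT, h3, h2, ?_, ?_⟩
  · intro j p₁ p₂ hp₁ hp₂ hne x₁ x₂ hx₁ hx₂
    rw [inSub_swap] at hx₁ hx₂
    exact h5 j p₁ p₂ hp₁ hp₂ hne x₁ x₂ hx₁ hx₂
  · intro j c₁ c₂ hc₁ hc₂ hne x₁ x₂ hx₁ hx₂
    rw [inSub_swap] at hx₁ hx₂
    exact h4 j c₁ c₂ hc₁ hc₂ hne x₁ x₂ hx₁ hx₂

/-- swap the A and B labels of an arc -/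
def swapArc (α : Arc n) : Arc n :=
  ⟨α.a, α.b, α.B, α.A, α.hab, α.hdisj.symm, by rw [Finset.union_comm]; exact α.hunion⟩

lemma subarc_swapArc {α β : Arc n} (h : Subarc α β) : Subarc (swapArc α) (swapArc β) :=
  ⟨h.1, h.2.1, h.2.2.2, h.2.2.1⟩

lemma mandatory_swap {E : Fin n → Fin n → Prop} {β : Arc n} (h : MandatoryArc E β) :
    MandatoryArc (Function.swap E) (swapArc β) := by
  refine ⟨h.1.symm, fun j hj1 hj2 => ?_⟩
  obtain ⟨hA, hB⟩ := h.2 j hj1 hj2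
  constructor
  · rw [show (swapArc β).A = β.B from rfl, hB]
    simp only [Relation.reflTransGen_swap]
    tauto
  · rw [show (swapArc β).B = β.A from rfl, hA]
    simp only [Relation.reflTransGen_swap]
    tauto

lemma swap_swap (E : Fin n → Fin n → Prop) : Function.swap (Function.swap E) = E := rfl

lemma swapArc_swapArc (α : Arc n) : swapArc (swapArc α) = α := rfl

end SepTreeLemmas8
section SepTreeLemmas9

open SimpleGraph

variable {n : ℕ} {E : Fin n → Fin n → Prop}

lemma subarc_refl (α : Arc n) : Subarc α α :=
  ⟨le_refl _, le_refl _, subset_rfl, subset_rfl⟩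

lemma exists_crossing (hT : (dirGraph E).IsTree) {a b : Fin n}
    (hab : (a : ℕ) + 1 = (b : ℕ)) :
    ∃ u v : Fin n, (E u v ∨ E v u) ∧ u ≤ a ∧ b ≤ v := by
  obtain ⟨w⟩ := hT.isConnected a b
  have haux : ∀ {s t : Fin n} (w : (dirGraph E).Walk s t), t = b → s ≤ a →
      ∃ u v : Fin n, (E u v ∨ E v u) ∧ u ≤ a ∧ b ≤ v := by
    intro s t w
    induction w with
    | nil =>
      rintro rfl hs
      rw [Fin.le_def] at hs
      omega
    | @cons s m b' h q ih =>
      intro ht hs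
      by_cases hm : (m : ℕ) ≤ (a : ℕ)
      · exact ih ht (Fin.le_def.mpr hm)
      · subst ht
        exact ⟨s, m, h.2, hs, Fin.le_def.mpr (by omega)⟩
  exact haux w rfl (le_refl a)

lemma shrink (hE : IsSepTree E) {a b : Fin n} (hlen : (a : ℕ) + 2 < (b : ℕ))
    (hnot : ¬∃ γ β : Arc n, UpArcBetween a b γ ∧ MandatoryArc E β ∧ Subarc γ β) :
    ∃ c d : Fin n, c < d ∧ a ≤ c ∧ d ≤ b ∧ ¬((c : ℕ) = (a : ℕ) ∧ (d : ℕ) = (b : ℕ)) ∧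
      ¬∃ γ β : Arc n, UpArcBetween c d γ ∧ MandatoryArc E β ∧ Subarc γ β := by
  have hbn : (b : ℕ) < n := b.isLt
  set x' : Fin n := ⟨(a : ℕ) + 1, by omega⟩ with hx'
  set y' : Fin n := ⟨(b : ℕ) - 1, by omega⟩ with hy'
  have hx'v : (x' : ℕ) = (a : ℕ) + 1 := rfl
  have hy'v : (y' : ℕ) = (b : ℕ) - 1 := rfl
  by_cases H1 : ∃ γ β : Arc n, UpArcBetween a y' γ ∧ MandatoryArc E β ∧ Subarc γ β
  · by_cases H2 : ∃ γ β : Arc n, UpArcBetween x' b γ ∧ MandatoryArc E β ∧ Subarc γ β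
    · exact absurd (keyStep hE a x' y' b hx'v (by omega) hlen H1 H2) hnot
    · refine ⟨x', b, ?_, ?_, le_refl b, ?_, H2⟩
      · rw [Fin.lt_def]; omega
      · rw [Fin.le_def]; omega
      · omega
  · refine ⟨a, y', ?_, le_refl a, ?_, ?_, H1⟩
    · rw [Fin.lt_def]; omega
    · rw [Fin.le_def]; omega
    · omega

end SepTreeLemmas9
/-- for a separating tree `E`, the minimal simple congruence `≡_∘` for
which `E` is admissible is a permutree congruence: every subarc-minimal forbidden arc
has length exactly `2`. Key step: if `j - i > 2` and both `u(i, j-1)` and `u(i+1, j)`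
are subarcs of mandatory arcs of `E`, then so is `u(i, j)`. -/
theorem stmt12 {n : ℕ} (E : Fin n → Fin n → Prop) (hE : IsSepTree E) :
    (∀ α : Arc n, MinNonArc (treeMinIdeal E) α → (α.b : ℕ) = (α.a : ℕ) + 2) ∧
    (∀ x x' y' y : Fin n, (x' : ℕ) = (x : ℕ) + 1 → (y : ℕ) = (y' : ℕ) + 1 →
      (x : ℕ) + 2 < (y : ℕ) →
      (∃ γ β : Arc n, UpArcBetween x y' γ ∧ MandatoryArc E β ∧ Subarc γ β) →
      (∃ γ β : Arc n, UpArcBetween x' y γ ∧ MandatoryArc E β ∧ Subarc γ β) →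
      ∃ γ β : Arc n, UpArcBetween x y γ ∧ MandatoryArc E β ∧ Subarc γ β) := by
  constructor
  · intro α hmin
    obtain ⟨hnotI, hminimal⟩ := hmin
    obtain ⟨γ, hsub, hud, hnm⟩ :
        ∃ γ : Arc n, Subarc γ α ∧ (γ.B = ∅ ∨ γ.A = ∅) ∧
          ¬∃ β : Arc n, MandatoryArc E β ∧ Subarc γ β := not_not.mp hnotI
    have hγI : γ ∉ treeMinIdeal E := fun hI => hI ⟨γ, subarc_refl γ, hud, hnm⟩
    have hγα : γ = α := hminimal γ hsub hγI
    subst hγα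
    have hab : γ.a < γ.b := γ.hab
    have habv : (γ.a : ℕ) < (γ.b : ℕ) := Fin.lt_def.mp hab
    -- rule out length 1
    rcases Nat.lt_or_ge ((γ.a : ℕ) + 1) (γ.b : ℕ) with hlong | hshort
    swap
    · -- length 1 : contradiction via a crossing edge
      exfalso
      have hb1 : (γ.a : ℕ) + 1 = (γ.b : ℕ) := by omega
      obtain ⟨u, v, hedge, hua, hbv⟩ := exists_crossing (E := E) hE.1 hb1
      have huv : u < v := by
        rw [Fin.lt_def]
        have h1 := Fin.le_def.mp hua
        have h2 := Fin.le_def.mp hbv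
        omega
      obtain ⟨β, hm, hba, hbb, _⟩ := mandatory_of_edge hE huv hedge
      have hIoo : Finset.Ioo γ.a γ.b = ∅ := by
        refine Finset.eq_empty_of_forall_notMem fun j hj => ?_
        rw [Finset.mem_Ioo, Fin.lt_def, Fin.lt_def] at hj
        omega
      have hAB := γ.hunion
      rw [hIoo, Finset.union_eq_empty] at hAB
      exact hnm ⟨β, hm, hba ▸ hua, hbb ▸ hbv, by rw [hAB.1]; exact Finset.empty_subset _,
        by rw [hAB.2]; exact Finset.empty_subset _⟩
    -- length ≥ 2; rule out > 2
    rcases Nat.lt_or_ge ((γ.a : ℕ) + 2) (γ.b : ℕ) with hlen | hshort2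
    swap
    · omega
    exfalso
    rcases hud with hB | hA
    · -- up arc case
      have hAeq : γ.A = Finset.Ioo γ.a γ.b := by
        rw [← γ.hunion, hB, Finset.union_empty]
      have hnot : ¬∃ γ' β : Arc n, UpArcBetween γ.a γ.b γ' ∧ MandatoryArc E β ∧
          Subarc γ' β := by
        rintro ⟨γ', β, ⟨hg1, hg2, hg3⟩, hm, hs⟩
        refine hnm ⟨β, hm, hg1 ▸ hs.1, hg2 ▸ hs.2.1, ?_, hB ▸ Finset.empty_subset _⟩
        have hg'A : γ'.A = Finset.Ioo γ.a γ.b := by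
          rw [← hg1, ← hg2, ← γ'.hunion, hg3, Finset.union_empty]
        rw [hAeq, ← hg'A]
        exact hs.2.2.1
      obtain ⟨c, d, hcd, hac, hdb, hne, hnot'⟩ := shrink hE hlen hnot
      set δ : Arc n := upArc c d hcd with hδ
      have hδI : δ ∉ treeMinIdeal E := fun hI => hI ⟨δ, subarc_refl δ, Or.inl rfl,
        fun ⟨β, hm, hs⟩ => hnot' ⟨δ, β, upArc_spec c d hcd, hm, hs⟩⟩
      have hδsub : Subarc δ γ := by
        refine ⟨hac, hdb, ?_, Finset.empty_subset _⟩
        rw [hAeq]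
        exact Finset.Ioo_subset_Ioo hac hdb
      have := hminimal δ hδsub hδI
      apply hne
      constructor
      · rw [← congrArg Arc.a this]; rfl
      · rw [← congrArg Arc.b this]; rfl
    · -- down arc case via swap
      have hBeq : γ.B = Finset.Ioo γ.a γ.b := by
        rw [← γ.hunion, hA, Finset.empty_union]
      have hnot : ¬∃ γ' β : Arc n, UpArcBetween γ.a γ.b γ' ∧
          MandatoryArc (Function.swap E) β ∧ Subarc γ' β := by
        rintro ⟨γ', β, ⟨hg1, hg2, hg3⟩, hm, hs⟩
        have hmE : MandatoryArc E (swapArc β) := mandatory_swap (E := Function.swap E) hm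
        refine hnm ⟨swapArc β, hmE, hg1 ▸ hs.1, hg2 ▸ hs.2.1,
          hA ▸ Finset.empty_subset _, ?_⟩
        have hg'A : γ'.A = Finset.Ioo γ.a γ.b := by
          rw [← hg1, ← hg2, ← γ'.hunion, hg3, Finset.union_empty]
        show γ.B ⊆ β.A
        rw [hBeq, ← hg'A]
        exact hs.2.2.1
      obtain ⟨c, d, hcd, hac, hdb, hne, hnot'⟩ := shrink (isSepTree_swap hE) hlen hnot
      set δ : Arc n := swapArc (upArc c d hcd) with hδ
      have hδnm : ¬∃ β : Arc n, MandatoryArc E β ∧ Subarc δ β := by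
        rintro ⟨β, hm, hs⟩
        exact hnot' ⟨upArc c d hcd, swapArc β, upArc_spec c d hcd,
          mandatory_swap hm, subarc_swapArc hs⟩
      have hδI : δ ∉ treeMinIdeal E := fun hI => hI ⟨δ, subarc_refl δ, Or.inr rfl, hδnm⟩
      have hδsub : Subarc δ γ := by
        refine ⟨hac, hdb, Finset.empty_subset _, ?_⟩
        show Finset.Ioo c d ⊆ γ.B
        rw [hBeq]
        exact Finset.Ioo_subset_Ioo hac hdb
      have := hminimal δ hδsub hδI
      apply hne
      constructor
      · rw [← congrArg Arc.a this]; rfl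
      · rw [← congrArg Arc.b this]; rfl
  · exact keyStep hE
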